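/- Let (X,d) be a metric space, φ a flow on X, and C₀ ≥ 1 a constant such that d(φ_t x, φ_t y) ≤ C₀^{|t|} d(x,y) for all t ∈ ℝ and x,y ∈ X. Let F > 0. Then there exists C ≥ 1, depending only on C₀ and F, such that the following holds: for all ρ ∈ X, α > 0, s,t ∈ ℝ, q ∈ ℤ and r ∈ ℝ with d(φ_t ρ, ρ) < α, d(φ_s ρ, ρ) < α, F/2 ≤ |s| < |t|, t = q·s + r and |r| < |s|, one has d(φ_r ρ, ρ) < C^{|t|} α. -/
import Mathlib


/-- Let `(X,d)` be a metric space, `φ` a flow on `X`, and `C₀ ≥ 1` with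
`d(φ_t x, φ_t y) ≤ C₀^{|t|} d(x,y)` for all `t, x, y`. Let `F > 0`. Then there is `C ≥ 1`
(depending only on `C₀` and `F`) such that: whenever `d(φ_t ρ, ρ) < α`, `d(φ_s ρ, ρ) < α`,
`F/2 ≤ |s| < |t|`, `t = q·s + r` with `q ∈ ℤ` and `|r| < |s|`, one has
`d(φ_r ρ, ρ) < C^{|t|} α`. -/
theorem flow_division_lemma {X : Type*} [MetricSpace X]
    (φ : ℝ → X → X) (hφ0 : ∀ x, φ 0 x = x) (hφadd : ∀ s t : ℝ, ∀ x, φ (s + t) x = φ s (φ t x))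
    (C₀ : ℝ) (hC₀ : 1 ≤ C₀)
    (hLip : ∀ (t : ℝ) (x y : X), dist (φ t x) (φ t y) ≤ C₀ ^ |t| * dist x y)
    (F : ℝ) (hF : 0 < F) :
    ∃ C : ℝ, 1 ≤ C ∧
      ∀ (ρ : X) (α s t r : ℝ) (q : ℤ),
        dist (φ t ρ) ρ < α → dist (φ s ρ) ρ < α →
        F / 2 ≤ |s| → |s| < |t| → t = (q : ℝ) * s + r → |r| < |s| →
        dist (φ r ρ) ρ < C ^ |t| * α := by
  have hC₀0 : (0:ℝ) < C₀ := lt_of_lt_of_le one_pos hC₀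
  refine ⟨C₀ ^ (6:ℝ) * Real.exp (4 / F), ?_, ?_⟩
  · have h1 : (1:ℝ) ≤ C₀ ^ (6:ℝ) := Real.one_le_rpow hC₀ (by norm_num)
    have h2 : (1:ℝ) ≤ Real.exp (4 / F) := Real.one_le_exp (by positivity)
    nlinarith
  intro ρ α s t r q ht hs hFs hst htr hr
  have hα : 0 < α := lt_of_le_of_lt dist_nonneg ht
  have hs0 : 0 < |s| := lt_of_lt_of_le (by positivity) hFs
  have ht0 : 0 < |t| := lt_trans hs0 hst
  set D := dist (φ s ρ) ρ with hDdef
  have hD0 : 0 ≤ D := dist_nonneg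
  -- iterate bound for natural multiples
  have iter : ∀ n : ℕ, dist (φ ((n:ℝ) * s) ρ) ρ ≤ (n:ℝ) * C₀ ^ ((n:ℝ) * |s|) * D := by
    intro n
    induction n with
    | zero => simp [hφ0]
    | succ n ih =>
      have e : ((n+1:ℕ):ℝ) * s = s + (n:ℝ) * s := by push_cast; ring
      rw [e, hφadd]
      have h1 : dist (φ s (φ ((n:ℝ)*s) ρ)) ρ
          ≤ dist (φ s (φ ((n:ℝ)*s) ρ)) (φ s ρ) + D := dist_triangle _ _ _
      have h2 : dist (φ s (φ ((n:ℝ)*s) ρ)) (φ s ρ) ≤ C₀ ^ |s| * dist (φ ((n:ℝ)*s) ρ) ρ :=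
        hLip s _ _
      have h3 : C₀ ^ |s| * dist (φ ((n:ℝ)*s) ρ) ρ
          ≤ C₀ ^ |s| * ((n:ℝ) * C₀ ^ ((n:ℝ) * |s|) * D) :=
        mul_le_mul_of_nonneg_left ih (Real.rpow_nonneg hC₀0.le _)
      have hpow : C₀ ^ |s| * C₀ ^ ((n:ℝ) * |s|) = C₀ ^ (((n:ℝ)+1) * |s|) := by
        rw [← Real.rpow_add hC₀0]; ring_nf
      have hone : (1:ℝ) ≤ C₀ ^ (((n:ℝ)+1) * |s|) :=
        Real.one_le_rpow hC₀ (by positivity)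
      have h4 : C₀ ^ |s| * ((n:ℝ) * C₀ ^ ((n:ℝ) * |s|) * D)
          = (n:ℝ) * C₀ ^ (((n:ℝ)+1) * |s|) * D := by rw [← hpow]; ring
      have h5 : D ≤ C₀ ^ (((n:ℝ)+1) * |s|) * D := le_mul_of_one_le_left hD0 hone
      push_cast
      nlinarith [h1, h2, h3, h4, h5]
  -- negation bound
  have negb : ∀ u : ℝ, dist (φ (-u) ρ) ρ ≤ C₀ ^ |u| * dist (φ u ρ) ρ := by
    intro u
    have e : φ (-u) (φ u ρ) = ρ := by rw [← hφadd]; simp [hφ0]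
    calc dist (φ (-u) ρ) ρ = dist (φ (-u) ρ) (φ (-u) (φ u ρ)) := by rw [e]
      _ ≤ C₀ ^ |(-u)| * dist ρ (φ u ρ) := hLip _ _ _
      _ = C₀ ^ |u| * dist (φ u ρ) ρ := by rw [abs_neg, dist_comm]
  -- integer multiples
  have iterZ : dist (φ ((q:ℝ) * s) ρ) ρ ≤ |(q:ℝ)| * C₀ ^ (2 * |(q:ℝ)| * |s|) * D := by
    obtain ⟨n, rfl | rfl⟩ := Int.eq_nat_or_neg q
    · push_cast [Nat.abs_cast]
      have hn0 : (0:ℝ) ≤ (n:ℝ) := Nat.cast_nonneg n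
      calc dist (φ ((n:ℝ)*s) ρ) ρ ≤ (n:ℝ) * C₀ ^ ((n:ℝ)*|s|) * D := iter n
        _ ≤ (n:ℝ) * C₀ ^ (2*(n:ℝ)*|s|) * D := by
            have hmono := Real.rpow_le_rpow_of_exponent_le hC₀
              (show (n:ℝ)*|s| ≤ 2*(n:ℝ)*|s| by nlinarith [hs0.le, hn0])
            nlinarith [mul_le_mul_of_nonneg_left hmono (mul_nonneg hn0 hD0)]
    · push_cast [Nat.abs_cast]
      simp only [abs_neg, Nat.abs_cast]
      rw [show -(n:ℝ) * s = -((n:ℝ) * s) by ring]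
      calc dist (φ (-((n:ℝ)*s)) ρ) ρ ≤ C₀ ^ |(n:ℝ)*s| * dist (φ ((n:ℝ)*s) ρ) ρ := negb _
        _ ≤ C₀ ^ ((n:ℝ)*|s|) * ((n:ℝ) * C₀ ^ ((n:ℝ)*|s|) * D) := by
            rw [abs_mul, Nat.abs_cast]
            exact mul_le_mul_of_nonneg_left (iter n) (Real.rpow_nonneg hC₀0.le _)
        _ = (n:ℝ) * (C₀ ^ ((n:ℝ)*|s|) * C₀ ^ ((n:ℝ)*|s|)) * D := by ring
        _ = (n:ℝ) * C₀ ^ (2*(n:ℝ)*|s|) * D := by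
            rw [← Real.rpow_add hC₀0]; ring_nf
  -- main decomposition
  set Q := |(q:ℝ)| with hQdef
  have hQ0 : 0 ≤ Q := abs_nonneg _
  have habs : |(q:ℝ) * s| = Q * |s| := abs_mul _ _
  have key : dist (φ r ρ) ρ
      ≤ C₀ ^ (Q * |s|) * dist (φ t ρ) ρ + C₀ ^ (Q * |s|) * dist (φ ((q:ℝ)*s) ρ) ρ := by
    have e : r = -((q:ℝ)*s) + t := by linarith
    rw [e, hφadd]
    calc dist (φ (-((q:ℝ)*s)) (φ t ρ)) ρ
        ≤ dist (φ (-((q:ℝ)*s)) (φ t ρ)) (φ (-((q:ℝ)*s)) ρ) + dist (φ (-((q:ℝ)*s)) ρ) ρ :=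
          dist_triangle _ _ _
      _ ≤ C₀ ^ |(-((q:ℝ)*s))| * dist (φ t ρ) ρ + C₀ ^ |(q:ℝ)*s| * dist (φ ((q:ℝ)*s) ρ) ρ :=
          add_le_add (hLip _ _ _) (negb _)
      _ = C₀ ^ (Q * |s|) * dist (φ t ρ) ρ + C₀ ^ (Q * |s|) * dist (φ ((q:ℝ)*s) ρ) ρ := by
          rw [abs_neg, habs]
  -- numeric bounds
  have hqs : (q:ℝ) * s = t - r := by linarith
  have hQs2t : Q * |s| ≤ 2 * |t| := by
    calc Q * |s| = |(q:ℝ)*s| := habs.symm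
      _ = |t - r| := by rw [hqs]
      _ ≤ |t| + |r| := abs_sub _ _
      _ ≤ 2 * |t| := by linarith [lt_trans hr hst]
  have hQle : Q ≤ 4 * |t| / F := by
    rw [le_div_iff₀ hF]
    nlinarith [mul_le_mul_of_nonneg_left hFs hQ0, hQs2t]
  have e1 : C₀ ^ (Q * |s|) ≤ C₀ ^ (6 * |t|) :=
    Real.rpow_le_rpow_of_exponent_le hC₀ (by nlinarith)
  have e2 : C₀ ^ (Q * |s|) * C₀ ^ (2 * Q * |s|) ≤ C₀ ^ (6 * |t|) := by
    rw [← Real.rpow_add hC₀0]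
    exact Real.rpow_le_rpow_of_exponent_le hC₀ (by nlinarith)
  have hG1 : (1:ℝ) ≤ C₀ ^ (6 * |t|) := Real.one_le_rpow hC₀ (by positivity)
  -- strict step
  have step1 : dist (φ r ρ) ρ
      < C₀ ^ (Q * |s|) * α + Q * (C₀ ^ (Q * |s|) * C₀ ^ (2 * Q * |s|)) * α := by
    refine lt_of_le_of_lt key (add_lt_add_of_lt_of_le ?_ ?_)
    · exact mul_lt_mul_of_pos_left ht (Real.rpow_pos_of_pos hC₀0 _)
    · calc C₀ ^ (Q * |s|) * dist (φ ((q:ℝ)*s) ρ) ρ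
          ≤ C₀ ^ (Q * |s|) * (Q * C₀ ^ (2 * Q * |s|) * D) :=
            mul_le_mul_of_nonneg_left iterZ (Real.rpow_nonneg hC₀0.le _)
        _ = Q * (C₀ ^ (Q * |s|) * C₀ ^ (2 * Q * |s|)) * D := by ring
        _ ≤ Q * (C₀ ^ (Q * |s|) * C₀ ^ (2 * Q * |s|)) * α := by
            refine mul_le_mul_of_nonneg_left hs.le ?_
            positivity
  have hexp : 1 + 4 * |t| / F ≤ Real.exp (4 * |t| / F) := by
    linarith [Real.add_one_le_exp (4 * |t| / F)]
  have hCpow : (C₀ ^ (6:ℝ) * Real.exp (4 / F)) ^ |t|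
      = C₀ ^ (6 * |t|) * Real.exp (4 * |t| / F) := by
    rw [Real.mul_rpow (by positivity) (by positivity), ← Real.rpow_mul hC₀0.le,
      ← Real.exp_mul]
    ring_nf
  rw [hCpow]
  have hG0 : (0:ℝ) ≤ C₀ ^ (6 * |t|) := by positivity
  calc dist (φ r ρ) ρ
      < C₀ ^ (Q * |s|) * α + Q * (C₀ ^ (Q * |s|) * C₀ ^ (2 * Q * |s|)) * α := step1
    _ ≤ C₀ ^ (6 * |t|) * α + (4 * |t| / F) * C₀ ^ (6 * |t|) * α := by
        refine add_le_add (mul_le_mul_of_nonneg_right e1 hα.le) ?_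
        refine mul_le_mul_of_nonneg_right ?_ hα.le
        exact mul_le_mul hQle e2 (by positivity) (by positivity)
    _ = (1 + 4 * |t| / F) * (C₀ ^ (6 * |t|) * α) := by ring
    _ ≤ Real.exp (4 * |t| / F) * (C₀ ^ (6 * |t|) * α) := by
        refine mul_le_mul_of_nonneg_right hexp (by positivity)
    _ = C₀ ^ (6 * |t|) * Real.exp (4 * |t| / F) * α := by ring
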